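/- Suppose the family {B_{m,n}} satisfies separated Weierstrass preparation in both kinds of variables. Then Weierstrass division in ξ_m holds: for all m ≥ 1, n ≥ 0, d ≥ 0, every f ∈ B_{m,n} regular in ξ_m of degree d, and every g ∈ B_{m,n}, there exist a unique q ∈ B_{m,n} and unique r_0,…,r_{d-1} ∈ B_{m-1,n} such that g = q·f + r_{d-1}ξ_m^{d-1} + ⋯ + r_1ξ_m + r_0. -/

import Mathlib

noncomputable section
open scoped Classical
open MvPowerSeries

namespace SCW

variable {B : Type*} [CommRing B]

/-- A variable of the two-kinds ambient: `Sum.inl i` is `ξ_{i+1}` and `Sum.inr j` is `ρ_{j+1}`.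
`varOK m n v` says that the variable `v` is one of `ξ_1,…,ξ_m,ρ_1,…,ρ_n`. -/
def varOK (m n : ℕ) : ℕ ⊕ ℕ → Prop := Sum.elim (· < m) (· < n)

/-- The action of a permutation of the variables on a separated power series. -/
def permute2 (e : Equiv.Perm (ℕ ⊕ ℕ)) (f : MvPowerSeries (ℕ ⊕ ℕ) B) :
    MvPowerSeries (ℕ ⊕ ℕ) B :=
  fun d => MvPowerSeries.coeff (Finsupp.equivMapDomain e d) f

/-- Coefficientwise reduction modulo the ideal `I`. -/
def red2 (I : Ideal B) : MvPowerSeries (ℕ ⊕ ℕ) B → MvPowerSeries (ℕ ⊕ ℕ) (B ⧸ I) :=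
  MvPowerSeries.map (Ideal.Quotient.mk I)

/-- The coefficient series `f̄_{μν}` of `(ξ'')^μ(ρ'')^ν` when `f` is written as a series in the
variables `ξ_i (i > m), ρ_j (j > n)` with coefficients series in `ξ_1,…,ξ_m,ρ_1,…,ρ_n`. -/
def slice2 (m n : ℕ) (μ : (ℕ ⊕ ℕ) →₀ ℕ) (f : MvPowerSeries (ℕ ⊕ ℕ) B) :
    MvPowerSeries (ℕ ⊕ ℕ) B :=
  fun d => if (∀ v ∈ d.support, varOK m n v) then MvPowerSeries.coeff (d + μ) f else 0

/-- The coefficient (a series in `ξ` only) of `ρ^μ` in `f`, viewing `f ∈ R[[ξ]][[ρ]]`. -/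
def sliceRho {R : Type*} [CommRing R] (μ : ℕ →₀ ℕ) (f : MvPowerSeries (ℕ ⊕ ℕ) R) :
    MvPowerSeries (ℕ ⊕ ℕ) R :=
  fun d => if (∀ j : ℕ, d (Sum.inr j) = 0)
    then MvPowerSeries.coeff (d + μ.mapDomain Sum.inr) f else 0

/-- `f` is (equal to) a polynomial in the `ξ`-variables only. -/
def IsPolyXi {R : Type*} [CommRing R] (f : MvPowerSeries (ℕ ⊕ ℕ) R) : Prop :=
  ∃ p : MvPolynomial (ℕ ⊕ ℕ) R, (∀ v ∈ p.vars, ∃ i : ℕ, v = Sum.inl i) ∧ f = ↑p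

/-- A family `{B_{m,n}}` of subalgebras
`B[ξ_1,…,ξ_m,ρ_1,…,ρ_n] ⊆ B_{m,n} ⊆ B_{m',n'} ⊆ B[[ξ_1,…,ξ_{m'},ρ_1,…,ρ_{n'}]]`, closed under
permutations of the `ξ`'s and of the `ρ`'s, satisfying condition (*) (coefficients of
`f ∈ B_{m',n'}` written as a series in `(ξ'',ρ'')` lie in `B_{m,n}`) and condition (**)
(`(B/I)[ξ,ρ] ⊆ B̃_{m,n} ⊆ (B/I)[ξ][[ρ]]`). -/
structure SepFamily (B : Type u) [CommRing B] (I : Ideal B) : Type u where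
  Bmn : ℕ → ℕ → Subalgebra B (MvPowerSeries (ℕ ⊕ ℕ) B)
  mono : ∀ {m n m' n' : ℕ}, m ≤ m' → n ≤ n' → Bmn m n ≤ Bmn m' n'
  varsBelow : ∀ m n, ∀ f ∈ Bmn m n, ∀ d : (ℕ ⊕ ℕ) →₀ ℕ,
    (∃ v ∈ d.support, ¬ varOK m n v) → MvPowerSeries.coeff d f = 0
  poly_mem : ∀ m n (p : MvPolynomial (ℕ ⊕ ℕ) B), (∀ v ∈ p.vars, varOK m n v) →
    (↑p : MvPowerSeries (ℕ ⊕ ℕ) B) ∈ Bmn m n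
  permXi : ∀ m n (e : Equiv.Perm ℕ), (∀ i, m ≤ i → e i = i) →
    ∀ f ∈ Bmn m n, permute2 (Equiv.sumCongr e (Equiv.refl ℕ)) f ∈ Bmn m n
  permRho : ∀ m n (e : Equiv.Perm ℕ), (∀ j, n ≤ j → e j = j) →
    ∀ f ∈ Bmn m n, permute2 (Equiv.sumCongr (Equiv.refl ℕ) e) f ∈ Bmn m n
  slice_mem : ∀ {m n m' n' : ℕ}, m ≤ m' → n ≤ n' → ∀ μ : (ℕ ⊕ ℕ) →₀ ℕ,
    (∀ v ∈ μ.support, ¬ varOK m n v) → ∀ f ∈ Bmn m' n', slice2 m n μ f ∈ Bmn m n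
  red_upper : ∀ m n, ∀ f ∈ Bmn m n, ∀ μ : ℕ →₀ ℕ, IsPolyXi (sliceRho μ (red2 I f))
  red_lower : ∀ m n (q : MvPolynomial (ℕ ⊕ ℕ) (B ⧸ I)), (∀ v ∈ q.vars, varOK m n v) →
    ∃ f ∈ Bmn m n, red2 I f = ↑q

/-- `f ∈ B_{m,n}` is regular in `ξ_m` of degree `d`: `f̃` mod `(ρ_1,…,ρ_n)` is a monic
polynomial in `ξ_m` of degree `d` (with lower coefficients in `(B/I)[ξ_1,…,ξ_{m-1}]`). -/
def SepRegXi (I : Ideal B) (m n d : ℕ) (f : MvPowerSeries (ℕ ⊕ ℕ) B) : Prop :=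
  ∃ c : Fin d → MvPolynomial (ℕ ⊕ ℕ) (B ⧸ I),
    (∀ i, ∀ v ∈ (c i).vars, ∃ i' : ℕ, i' < m - 1 ∧ v = Sum.inl i') ∧
    ∀ e : (ℕ ⊕ ℕ) →₀ ℕ, (∀ j : ℕ, j < n → e (Sum.inr j) = 0) →
      MvPowerSeries.coeff e (red2 I f) =
      MvPowerSeries.coeff e
        ↑((MvPolynomial.X (Sum.inl (m - 1)) : MvPolynomial (ℕ ⊕ ℕ) (B ⧸ I)) ^ d
          + ∑ i : Fin d, c i * (MvPolynomial.X (Sum.inl (m - 1))) ^ (i : ℕ))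

/-- `f ∈ B_{m,n}` is regular in `ρ_n` of degree `d`:
`f̃ ≡ ρ_n^d mod (ρ_1,…,ρ_{n-1},ρ_n^{d+1})` in `(B/I)[ξ][[ρ]]`. -/
def SepRegRho (I : Ideal B) (n d : ℕ) (f : MvPowerSeries (ℕ ⊕ ℕ) B) : Prop :=
  ∀ e : (ℕ ⊕ ℕ) →₀ ℕ, (∀ j : ℕ, j < n - 1 → e (Sum.inr j) = 0) →
    (∀ j : ℕ, n ≤ j → e (Sum.inr j) = 0) → e (Sum.inr (n - 1)) ≤ d →
    MvPowerSeries.coeff e (red2 I f) =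
      if e = Finsupp.single (Sum.inr (n - 1)) d then 1 else 0

/-- Separated Weierstrass preparation in the variables of both kinds for `{B_{m,n}}`. -/
def SepHasWP {B : Type u} [CommRing B] {I : Ideal B} (ℬ : SepFamily B I) : Prop :=
  (∀ m n d : ℕ, 1 ≤ m → ∀ f ∈ ℬ.Bmn m n, SepRegXi I m n d f →
    ∃! ur : MvPowerSeries (ℕ ⊕ ℕ) B × (Fin d → MvPowerSeries (ℕ ⊕ ℕ) B),
      ur.1 ∈ ℬ.Bmn m n ∧ (∃ v ∈ ℬ.Bmn m n, ur.1 * v = 1) ∧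
      (∀ i, ur.2 i ∈ ℬ.Bmn (m - 1) n) ∧
      f = ur.1 * ((MvPowerSeries.X (Sum.inl (m - 1))) ^ d
        + ∑ i : Fin d, ur.2 i * (MvPowerSeries.X (Sum.inl (m - 1))) ^ (i : ℕ))) ∧
  (∀ m n d : ℕ, 1 ≤ n → ∀ f ∈ ℬ.Bmn m n, SepRegRho I n d f →
    ∃! ur : MvPowerSeries (ℕ ⊕ ℕ) B × (Fin d → MvPowerSeries (ℕ ⊕ ℕ) B),
      ur.1 ∈ ℬ.Bmn m n ∧ (∃ v ∈ ℬ.Bmn m n, ur.1 * v = 1) ∧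
      (∀ i, ur.2 i ∈ ℬ.Bmn m (n - 1)) ∧
      f = ur.1 * ((MvPowerSeries.X (Sum.inr (n - 1))) ^ d
        + ∑ i : Fin d, ur.2 i * (MvPowerSeries.X (Sum.inr (n - 1))) ^ (i : ℕ)))

end SCW

namespace SCWAux
open SCW Finset

variable {B : Type*} [CommRing B]

/-- All variables of `e` are among `ξ_1,…,ξ_m,ρ_1,…,ρ_n`. -/
def OKm (m n : ℕ) (e : (ℕ ⊕ ℕ) →₀ ℕ) : Prop := ∀ v ∈ e.support, varOK m n v

theorem coeff_slice2 (m n : ℕ) (μ e : (ℕ ⊕ ℕ) →₀ ℕ) (f : MvPowerSeries (ℕ ⊕ ℕ) B) :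
    MvPowerSeries.coeff e (slice2 m n μ f) =
      if OKm m n e then MvPowerSeries.coeff (e + μ) f else 0 := by
  rw [MvPowerSeries.coeff_apply, slice2, OKm]
  split_ifs <;> rfl

theorem OKm.of_le {m n : ℕ} {a e : (ℕ ⊕ ℕ) →₀ ℕ} (h : OKm m n e) (hae : ∀ v, a v ≤ e v) :
    OKm m n a := by
  intro v hv
  refine h v (Finsupp.mem_support_iff.2 ?_)
  have h1 := Finsupp.mem_support_iff.1 hv
  have h2 := hae v
  omega

theorem OKm.rho {m n : ℕ} {e : (ℕ ⊕ ℕ) →₀ ℕ} (h : OKm m n e) : e (Sum.inr n) = 0 := by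
  by_contra hc
  exact absurd (h _ (Finsupp.mem_support_iff.2 hc)) (by simp [varOK])

theorem not_OKm {m n : ℕ} {e : (ℕ ⊕ ℕ) →₀ ℕ} (h : ¬ OKm m n e) :
    ∃ v ∈ e.support, ¬ varOK m n v := by
  rw [OKm] at h; push_neg at h; exact h

theorem coeff_zero_of_mem {I : Ideal B} (ℬ : SepFamily B I) {m n : ℕ}
    {f : MvPowerSeries (ℕ ⊕ ℕ) B} (hf : f ∈ ℬ.Bmn m n) {e : (ℕ ⊕ ℕ) →₀ ℕ}
    (he : ¬ OKm m n e) : MvPowerSeries.coeff e f = 0 :=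
  ℬ.varsBelow m n f hf e (not_OKm he)

theorem slice2_add (m n : ℕ) (μ : (ℕ ⊕ ℕ) →₀ ℕ) (f g : MvPowerSeries (ℕ ⊕ ℕ) B) :
    slice2 m n μ (f + g) = slice2 m n μ f + slice2 m n μ g := by
  apply MvPowerSeries.ext; intro e
  rw [map_add, coeff_slice2, coeff_slice2, coeff_slice2, map_add]
  split_ifs <;> simp

/-- `slice2` as an additive monoid hom. -/
def sliceHom (m n : ℕ) (μ : (ℕ ⊕ ℕ) →₀ ℕ) :
    MvPowerSeries (ℕ ⊕ ℕ) B →+ MvPowerSeries (ℕ ⊕ ℕ) B where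
  toFun := slice2 m n μ
  map_zero' := by
    apply MvPowerSeries.ext; intro e
    rw [coeff_slice2]; simp
  map_add' := slice2_add m n μ

theorem slice2_sum {α : Type*} (m n : ℕ) (μ : (ℕ ⊕ ℕ) →₀ ℕ) (s : Finset α)
    (f : α → MvPowerSeries (ℕ ⊕ ℕ) B) :
    slice2 m n μ (∑ a ∈ s, f a) = ∑ a ∈ s, slice2 m n μ (f a) :=
  map_sum (sliceHom m n μ) f s

theorem slice2_one (m n : ℕ) : slice2 m n 0 (1 : MvPowerSeries (ℕ ⊕ ℕ) B) = 1 := by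
  apply MvPowerSeries.ext; intro e
  rw [coeff_slice2, add_zero]
  by_cases h0 : e = 0
  · subst h0
    have hOK : OKm m n 0 := fun v hv => by simp at hv
    rw [if_pos hOK]
  · have h1 : MvPowerSeries.coeff e (1 : MvPowerSeries (ℕ ⊕ ℕ) B) = 0 := by
      classical rw [MvPowerSeries.coeff_one, if_neg h0]
    rw [h1]; split_ifs <;> rfl

theorem slice2_zero_mul (m n : ℕ) (f g : MvPowerSeries (ℕ ⊕ ℕ) B) :
    slice2 m n 0 (f * g) = slice2 m n 0 f * slice2 m n 0 g := by
  classical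
  apply MvPowerSeries.ext; intro e
  by_cases he : OKm m n e
  · have hl : MvPowerSeries.coeff e (slice2 m n 0 (f * g))
        = MvPowerSeries.coeff e (f * g) := by
      rw [coeff_slice2, if_pos he, add_zero]
    rw [hl, MvPowerSeries.coeff_mul, MvPowerSeries.coeff_mul]
    refine Finset.sum_congr rfl ?_
    rintro ⟨a, b⟩ hab
    rw [Finset.HasAntidiagonal.mem_antidiagonal] at hab
    have ha : OKm m n a := he.of_le fun v => by
      rw [← hab, Finsupp.add_apply]; exact Nat.le_add_right _ _
    have hb : OKm m n b := he.of_le fun v => by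
      rw [← hab, Finsupp.add_apply]; exact Nat.le_add_left _ _
    rw [coeff_slice2, coeff_slice2, if_pos ha, if_pos hb, add_zero, add_zero]
  · have hl : MvPowerSeries.coeff e (slice2 m n 0 (f * g)) = 0 := by
      rw [coeff_slice2, if_neg he]
    rw [hl, MvPowerSeries.coeff_mul]
    symm; apply Finset.sum_eq_zero
    rintro ⟨a, b⟩ hab
    rw [Finset.HasAntidiagonal.mem_antidiagonal] at hab
    dsimp only at hab
    obtain ⟨v, hv, hbad⟩ := not_OKm he
    have hv' := Finsupp.mem_support_iff.1 hv
    rw [← hab, Finsupp.add_apply] at hv'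
    rcases (show a v ≠ 0 ∨ b v ≠ 0 by omega) with h | h
    · have hna : ¬ OKm m n a := fun hOK => hbad (hOK v (Finsupp.mem_support_iff.2 h))
      rw [coeff_slice2, if_neg hna, zero_mul]
    · have hnb : ¬ OKm m n b := fun hOK => hbad (hOK v (Finsupp.mem_support_iff.2 h))
      rw [coeff_slice2 m n 0 b, if_neg hnb, mul_zero]

/-- The exponent of `ρ_{n+1}` to first order. -/
theorem slice2_delta_mul (m n : ℕ) (f g : MvPowerSeries (ℕ ⊕ ℕ) B) :
    slice2 m n (Finsupp.single (Sum.inr n) 1) (f * g)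
      = slice2 m n (Finsupp.single (Sum.inr n) 1) f * slice2 m n 0 g
        + slice2 m n 0 f * slice2 m n (Finsupp.single (Sum.inr n) 1) g := by
  classical
  set δ : (ℕ ⊕ ℕ) →₀ ℕ := Finsupp.single (Sum.inr n) 1 with hδ
  apply MvPowerSeries.ext; intro e
  rw [map_add]
  by_cases he : OKm m n e
  · have hl : MvPowerSeries.coeff e (slice2 m n δ (f * g))
        = MvPowerSeries.coeff (e + δ) (f * g) := by rw [coeff_slice2, if_pos he]
    rw [hl, MvPowerSeries.coeff_mul, MvPowerSeries.coeff_mul, MvPowerSeries.coeff_mul]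
    have hen : e (Sum.inr n) = 0 := he.rho
    rw [← Finset.sum_filter_add_sum_filter_not (Finset.HasAntidiagonal.antidiagonal (e + δ))
      (fun p => p.1 (Sum.inr n) = 1)]
    congr 1
    · refine Finset.sum_nbij' (fun p => (p.1 - δ, p.2)) (fun p => (p.1 + δ, p.2))
        ?_ ?_ ?_ ?_ ?_
      · rintro ⟨a, b⟩ hab
        rw [Finset.mem_filter, Finset.HasAntidiagonal.mem_antidiagonal] at hab
        dsimp only at hab ⊢
        obtain ⟨hab, h1⟩ := hab
        rw [Finset.HasAntidiagonal.mem_antidiagonal]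
        dsimp only
        ext v
        have h2 := DFunLike.congr_fun hab v
        simp only [Finsupp.add_apply, Finsupp.tsub_apply, hδ, Finsupp.single_apply] at h2 ⊢
        split_ifs at h2 ⊢ with hv
        · subst hv; omega
        · omega
      · rintro ⟨a, b⟩ hab
        rw [Finset.HasAntidiagonal.mem_antidiagonal] at hab
        dsimp only at hab
        rw [Finset.mem_filter, Finset.HasAntidiagonal.mem_antidiagonal]
        dsimp only
        constructor
        · ext v
          have h2 := DFunLike.congr_fun hab v
          simp only [Finsupp.add_apply, hδ, Finsupp.single_apply] at h2 ⊢
          omega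
        · show (a + δ) (Sum.inr n) = 1
          have h2 := DFunLike.congr_fun hab (Sum.inr n)
          simp only [Finsupp.add_apply] at h2 ⊢
          simp only [hδ, Finsupp.single_apply, eq_self_iff_true, if_true]
          omega
      · rintro ⟨a, b⟩ hab
        rw [Finset.mem_filter, Finset.HasAntidiagonal.mem_antidiagonal] at hab
        dsimp only at hab ⊢
        obtain ⟨-, h1⟩ := hab
        have hle : δ ≤ a := by rw [hδ]; exact Finsupp.single_le_iff.2 (by omega)
        rw [Prod.mk.injEq]
        exact ⟨tsub_add_cancel_of_le hle, rfl⟩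
      · rintro ⟨a, b⟩ hab
        dsimp only
        rw [Prod.mk.injEq]
        refine ⟨?_, rfl⟩
        ext v
        simp only [Finsupp.add_apply, Finsupp.tsub_apply]
        omega
      · rintro ⟨a, b⟩ hab
        rw [Finset.mem_filter, Finset.HasAntidiagonal.mem_antidiagonal] at hab
        dsimp only at hab ⊢
        obtain ⟨hab, h1⟩ := hab
        have hle : δ ≤ a := by rw [hδ]; exact Finsupp.single_le_iff.2 (by omega)
        have hOKb : OKm m n b := he.of_le fun v => by
          have h2 := DFunLike.congr_fun hab v
          simp only [Finsupp.add_apply, hδ, Finsupp.single_apply] at h2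
          split_ifs at h2 with hv
          · subst hv; omega
          · omega
        have hOKa : OKm m n (a - δ) := he.of_le fun v => by
          have h2 := DFunLike.congr_fun hab v
          simp only [Finsupp.add_apply, Finsupp.tsub_apply, hδ, Finsupp.single_apply] at h2 ⊢
          split_ifs at h2 ⊢ with hv
          · subst hv; omega
          · omega
        rw [coeff_slice2, coeff_slice2, if_pos hOKa, if_pos hOKb, add_zero,
          tsub_add_cancel_of_le hle]
    · refine Finset.sum_nbij' (fun p => (p.1, p.2 - δ)) (fun p => (p.1, p.2 + δ))
        ?_ ?_ ?_ ?_ ?_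
      · rintro ⟨a, b⟩ hab
        rw [Finset.mem_filter, Finset.HasAntidiagonal.mem_antidiagonal] at hab
        dsimp only at hab ⊢
        obtain ⟨hab, h1⟩ := hab
        rw [Finset.HasAntidiagonal.mem_antidiagonal]
        dsimp only
        ext v
        have h2 := DFunLike.congr_fun hab v
        simp only [Finsupp.add_apply, Finsupp.tsub_apply, hδ, Finsupp.single_apply] at h2 ⊢
        split_ifs at h2 ⊢ with hv
        · subst hv; omega
        · omega
      · rintro ⟨a, b⟩ hab
        rw [Finset.HasAntidiagonal.mem_antidiagonal] at hab
        dsimp only at hab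
        rw [Finset.mem_filter, Finset.HasAntidiagonal.mem_antidiagonal]
        dsimp only
        have hae : ∀ v, a v ≤ e v := fun v => by
          have h2 := DFunLike.congr_fun hab v
          simp only [Finsupp.add_apply] at h2
          omega
        constructor
        · ext v
          have h2 := DFunLike.congr_fun hab v
          simp only [Finsupp.add_apply, hδ, Finsupp.single_apply] at h2 ⊢
          omega
        · have := hae (Sum.inr n)
          omega
      · rintro ⟨a, b⟩ hab
        rw [Finset.mem_filter, Finset.HasAntidiagonal.mem_antidiagonal] at hab
        dsimp only at hab ⊢
        obtain ⟨hab, h1⟩ := hab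
        have h2 := DFunLike.congr_fun hab (Sum.inr n)
        simp only [Finsupp.add_apply, hδ, Finsupp.single_apply, eq_self_iff_true, if_true] at h2
        have hle : δ ≤ b := by rw [hδ]; exact Finsupp.single_le_iff.2 (by omega)
        rw [Prod.mk.injEq]
        exact ⟨rfl, tsub_add_cancel_of_le hle⟩
      · rintro ⟨a, b⟩ hab
        dsimp only
        rw [Prod.mk.injEq]
        refine ⟨rfl, ?_⟩
        ext v
        simp only [Finsupp.add_apply, Finsupp.tsub_apply]
        omega
      · rintro ⟨a, b⟩ hab
        rw [Finset.mem_filter, Finset.HasAntidiagonal.mem_antidiagonal] at hab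
        dsimp only at hab ⊢
        obtain ⟨hab, h1⟩ := hab
        have h2n := DFunLike.congr_fun hab (Sum.inr n)
        simp only [Finsupp.add_apply, hδ, Finsupp.single_apply, eq_self_iff_true, if_true] at h2n
        have hle : δ ≤ b := by rw [hδ]; exact Finsupp.single_le_iff.2 (by omega)
        have hOKa : OKm m n a := he.of_le fun v => by
          have h2 := DFunLike.congr_fun hab v
          simp only [Finsupp.add_apply, hδ, Finsupp.single_apply] at h2
          split_ifs at h2 with hv
          · subst hv; omega
          · omega
        have hOKb : OKm m n (b - δ) := he.of_le fun v => by
          have h2 := DFunLike.congr_fun hab v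
          simp only [Finsupp.add_apply, Finsupp.tsub_apply, hδ, Finsupp.single_apply] at h2 ⊢
          split_ifs at h2 ⊢ with hv
          · subst hv; omega
          · omega
        rw [coeff_slice2, coeff_slice2, if_pos hOKa, if_pos hOKb, add_zero,
          tsub_add_cancel_of_le hle]
  · have hl : MvPowerSeries.coeff e (slice2 m n δ (f * g)) = 0 := by
      rw [coeff_slice2, if_neg he]
    rw [hl, MvPowerSeries.coeff_mul, MvPowerSeries.coeff_mul]
    symm
    obtain ⟨v, hv, hbad⟩ := not_OKm he
    have hv0 := Finsupp.mem_support_iff.1 hv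
    have hz : ∀ (μ₁ μ₂ : (ℕ ⊕ ℕ) →₀ ℕ), (∑ p ∈ Finset.HasAntidiagonal.antidiagonal e,
        MvPowerSeries.coeff p.1 (slice2 m n μ₁ f) * MvPowerSeries.coeff p.2 (slice2 m n μ₂ g)) = 0 := by
      intro μ₁ μ₂
      apply Finset.sum_eq_zero
      rintro ⟨a, b⟩ hab
      rw [Finset.HasAntidiagonal.mem_antidiagonal] at hab
      dsimp only at hab ⊢
      have hv' : a v + b v ≠ 0 := by
        have h2 := DFunLike.congr_fun hab v
        simp only [Finsupp.add_apply] at h2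
        omega
      rcases (show a v ≠ 0 ∨ b v ≠ 0 by omega) with h | h
      · have hna : ¬ OKm m n a := fun hOK => hbad (hOK v (Finsupp.mem_support_iff.2 h))
        rw [coeff_slice2, if_neg hna, zero_mul]
      · have hnb : ¬ OKm m n b := fun hOK => hbad (hOK v (Finsupp.mem_support_iff.2 h))
        rw [coeff_slice2 m n μ₂ b, if_neg hnb, mul_zero]
    rw [hz δ 0, hz 0 δ, add_zero]

theorem slice2_zero_of_mem {I : Ideal B} (ℬ : SepFamily B I) {m n : ℕ}
    {f : MvPowerSeries (ℕ ⊕ ℕ) B} (hf : f ∈ ℬ.Bmn m n) : slice2 m n 0 f = f := by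
  apply MvPowerSeries.ext; intro e
  rw [coeff_slice2, add_zero]
  split_ifs with h
  · rfl
  · exact (coeff_zero_of_mem ℬ hf h).symm

theorem slice2_delta_of_mem {I : Ideal B} (ℬ : SepFamily B I) {m n : ℕ}
    {f : MvPowerSeries (ℕ ⊕ ℕ) B} (hf : f ∈ ℬ.Bmn m n) :
    slice2 m n (Finsupp.single (Sum.inr n) 1) f = 0 := by
  apply MvPowerSeries.ext; intro e
  rw [coeff_slice2, map_zero]
  split_ifs with h
  · apply ℬ.varsBelow m n f hf
    refine ⟨Sum.inr n, Finsupp.mem_support_iff.2 ?_, by simp [varOK]⟩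
    simp [Finsupp.add_apply, Finsupp.single_apply]
  · rfl

theorem slice2_zero_X_rho (m n : ℕ) :
    slice2 m n 0 (MvPowerSeries.X (Sum.inr n) : MvPowerSeries (ℕ ⊕ ℕ) B) = 0 := by
  classical
  apply MvPowerSeries.ext; intro e
  rw [coeff_slice2, add_zero, map_zero]
  split_ifs with h
  · rw [MvPowerSeries.coeff_X, if_neg]
    intro hc
    have := h.rho
    rw [hc] at this
    simp at this
  · rfl

theorem slice2_delta_X_rho (m n : ℕ) :
    slice2 m n (Finsupp.single (Sum.inr n) 1)
      (MvPowerSeries.X (Sum.inr n) : MvPowerSeries (ℕ ⊕ ℕ) B) = 1 := by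
  classical
  apply MvPowerSeries.ext; intro e
  rw [coeff_slice2]
  by_cases h0 : e = 0
  · subst h0
    have hOK : OKm m n 0 := fun v hv => by simp at hv
    rw [if_pos hOK, zero_add, MvPowerSeries.coeff_X, if_pos rfl, MvPowerSeries.coeff_zero_one]
  · have h1 : MvPowerSeries.coeff e (1 : MvPowerSeries (ℕ ⊕ ℕ) B) = 0 := by
      rw [MvPowerSeries.coeff_one, if_neg h0]
    rw [h1]
    split_ifs with h
    · rw [MvPowerSeries.coeff_X, if_neg]
      intro hc
      apply h0
      ext v
      have h2 := DFunLike.congr_fun hc v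
      simp only [Finsupp.add_apply] at h2
      simp only [Finsupp.zero_apply]
      omega
    · rfl

theorem slice2_pred {I : Ideal B} (ℬ : SepFamily B I) {m n : ℕ} (hm : 1 ≤ m)
    (μ : (ℕ ⊕ ℕ) →₀ ℕ) {f : MvPowerSeries (ℕ ⊕ ℕ) B} (hf : f ∈ ℬ.Bmn (m - 1) (n + 1)) :
    slice2 m n μ f = slice2 (m - 1) n μ f := by
  apply MvPowerSeries.ext; intro e
  rw [coeff_slice2, coeff_slice2]
  by_cases h1 : OKm (m - 1) n e
  · have h2 : OKm m n e := fun v hv => by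
      have h3 := h1 v hv
      rcases v with i | j <;> simp [varOK] at h3 ⊢ <;> omega
    rw [if_pos h1, if_pos h2]
  · rw [if_neg h1]
    by_cases h2 : OKm m n e
    · rw [if_pos h2]
      obtain ⟨v, hv, hbad⟩ := not_OKm h1
      have hgood := h2 v hv
      apply ℬ.varsBelow _ _ f hf
      refine ⟨v, Finsupp.mem_support_iff.2 ?_, ?_⟩
      · have := Finsupp.mem_support_iff.1 hv
        simp only [Finsupp.add_apply]
        omega
      · rcases v with i | j
        · simp [varOK] at hbad ⊢
          omega
        · simp [varOK] at hbad hgood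
          omega
    · rw [if_neg h2]

theorem nontrivial_of_ne_top {I : Ideal B} (hI : I ≠ ⊤) : Nontrivial B := by
  by_contra h
  rw [not_nontrivial_iff_subsingleton] at h
  refine hI ((Ideal.eq_top_iff_one _).2 ?_)
  rw [Subsingleton.elim (1 : B) 0]
  exact I.zero_mem

theorem X_mem {I : Ideal B} (ℬ : SepFamily B I) (hI : I ≠ ⊤) {m n : ℕ} {v : ℕ ⊕ ℕ}
    (hv : varOK m n v) : (MvPowerSeries.X v : MvPowerSeries (ℕ ⊕ ℕ) B) ∈ ℬ.Bmn m n := by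
  haveI : Nontrivial B := nontrivial_of_ne_top hI
  have := ℬ.poly_mem m n (MvPolynomial.X v) (by
    intro w hw
    rw [MvPolynomial.vars_X, Finset.mem_singleton] at hw
    subst hw; exact hv)
  rwa [MvPolynomial.coe_X] at this

theorem X_mul_cancel {v : ℕ ⊕ ℕ} {Q : MvPowerSeries (ℕ ⊕ ℕ) B}
    (h : MvPowerSeries.X v * Q = 0) : Q = 0 := by
  apply MvPowerSeries.ext; intro e
  have h2 := congrArg (MvPowerSeries.coeff (Finsupp.single v 1 + e)) h
  rw [show (MvPowerSeries.X v : MvPowerSeries (ℕ ⊕ ℕ) B)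
      = MvPowerSeries.monomial (Finsupp.single v 1) 1 from rfl,
    MvPowerSeries.coeff_add_monomial_mul, one_mul, map_zero] at h2
  rw [h2, map_zero]

theorem coeff_Xrho_mul {R : Type*} [CommRing R] {n : ℕ} {e : (ℕ ⊕ ℕ) →₀ ℕ}
    (he : e (Sum.inr n) = 0) (g : MvPowerSeries (ℕ ⊕ ℕ) R) :
    MvPowerSeries.coeff e (MvPowerSeries.X (Sum.inr n) * g) = 0 := by
  rw [show (MvPowerSeries.X (Sum.inr n) : MvPowerSeries (ℕ ⊕ ℕ) R)
      = MvPowerSeries.monomial (Finsupp.single (Sum.inr n) 1) 1 from rfl,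
    MvPowerSeries.coeff_monomial_mul]
  rw [if_neg]
  intro hle
  have := Finsupp.single_le_iff.1 hle
  omega

theorem coe_target {R : Type*} [CommRing R] (d m : ℕ) (c : Fin d → MvPolynomial (ℕ ⊕ ℕ) R) :
    (↑((MvPolynomial.X (Sum.inl (m - 1)) : MvPolynomial (ℕ ⊕ ℕ) R) ^ d
        + ∑ i : Fin d, c i * (MvPolynomial.X (Sum.inl (m - 1))) ^ (i : ℕ))
      : MvPowerSeries (ℕ ⊕ ℕ) R)
    = (MvPowerSeries.X (Sum.inl (m - 1))) ^ d
        + ∑ i : Fin d, ((c i : MvPowerSeries (ℕ ⊕ ℕ) R)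
          * (MvPowerSeries.X (Sum.inl (m - 1))) ^ (i : ℕ)) := by
  rw [← MvPolynomial.coeToMvPowerSeries.ringHom_apply, map_add, map_pow, map_sum]
  simp only [map_mul, map_pow, MvPolynomial.coeToMvPowerSeries.ringHom_apply,
    MvPolynomial.coe_X]

theorem reg_of_P {I : Ideal B} (ℬ : SepFamily B I) {m n d : ℕ}
    (s : Fin d → MvPowerSeries (ℕ ⊕ ℕ) B) (hs : ∀ i, s i ∈ ℬ.Bmn (m - 1) n) :
    ∃ c : Fin d → MvPolynomial (ℕ ⊕ ℕ) (B ⧸ I),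
      (∀ i, ∀ v ∈ (c i).vars, ∃ i' : ℕ, i' < m - 1 ∧ v = Sum.inl i') ∧
      ∀ e : (ℕ ⊕ ℕ) →₀ ℕ, (∀ j : ℕ, j < n → e (Sum.inr j) = 0) →
        MvPowerSeries.coeff e (red2 I ((MvPowerSeries.X (Sum.inl (m - 1))) ^ d
          + ∑ i : Fin d, s i * (MvPowerSeries.X (Sum.inl (m - 1))) ^ (i : ℕ)))
        = MvPowerSeries.coeff e
            ↑((MvPolynomial.X (Sum.inl (m - 1)) : MvPolynomial (ℕ ⊕ ℕ) (B ⧸ I)) ^ d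
              + ∑ i : Fin d, c i * (MvPolynomial.X (Sum.inl (m - 1))) ^ (i : ℕ)) := by
  classical
  choose c hcvars hceq using fun i => ℬ.red_upper (m - 1) n (s i) (hs i) 0
  have hcc : ∀ (i : Fin d) (a : (ℕ ⊕ ℕ) →₀ ℕ), (∀ j : ℕ, j < n → a (Sum.inr j) = 0) →
      MvPowerSeries.coeff a (red2 I (s i))
        = MvPowerSeries.coeff a ↑(c i) := by
    intro i a ha
    by_cases hz : ∀ j : ℕ, a (Sum.inr j) = 0
    · have h1 := congrArg (MvPowerSeries.coeff a) (hceq i)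
      rw [MvPowerSeries.coeff_apply] at h1
      simp only [sliceRho, if_pos hz, Finsupp.mapDomain_zero, add_zero] at h1
      exact h1
    · push_neg at hz
      obtain ⟨j, hj⟩ := hz
      have hjn : ¬ j < n := fun hc => hj (ha j hc)
      have h2 : MvPowerSeries.coeff a (s i) = 0 := by
        apply ℬ.varsBelow _ _ _ (hs i)
        exact ⟨Sum.inr j, Finsupp.mem_support_iff.2 hj, by simp [varOK, hjn]⟩
      have h3 : MvPowerSeries.coeff a (red2 I (s i)) = 0 := by
        rw [red2, MvPowerSeries.coeff_map, h2, map_zero]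
      rw [h3, MvPolynomial.coeff_coe]
      by_contra hc
      have ha' : a ∈ (c i).support := MvPolynomial.mem_support_iff.2 fun h => hc h.symm
      have hv : Sum.inr j ∈ (c i).vars :=
        (MvPolynomial.mem_vars _).2 ⟨a, ha', Finsupp.mem_support_iff.2 hj⟩
      obtain ⟨i0, hii⟩ := hcvars i _ hv
      simp at hii
  have hvars' : ∀ i, ∀ v ∈ (c i).vars, ∃ i' : ℕ, i' < m - 1 ∧ v = Sum.inl i' := by
    intro i v hv
    obtain ⟨i0, hi0⟩ := hcvars i v hv
    refine ⟨i0, ?_, hi0⟩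
    by_contra hge
    obtain ⟨dd, hdds, hdd⟩ := (MvPolynomial.mem_vars v).1 hv
    have hcoeff_dd : MvPolynomial.coeff dd (c i) ≠ 0 := MvPolynomial.mem_support_iff.1 hdds
    have h1 := congrArg (MvPowerSeries.coeff dd) (hceq i)
    rw [MvPolynomial.coeff_coe] at h1
    rw [MvPowerSeries.coeff_apply] at h1
    by_cases hz2 : ∀ j : ℕ, dd (Sum.inr j) = 0
    · simp only [sliceRho, if_pos hz2, Finsupp.mapDomain_zero, add_zero] at h1
      have h2 : MvPowerSeries.coeff dd (s i) = 0 := by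
        apply ℬ.varsBelow _ _ _ (hs i)
        refine ⟨v, ?_, ?_⟩
        · exact hdd
        · rw [hi0]; simp [varOK]; omega
      rw [red2, MvPowerSeries.coeff_map, h2, map_zero] at h1
      exact hcoeff_dd h1.symm
    · simp only [sliceRho, if_neg hz2] at h1
      exact hcoeff_dd h1.symm
  refine ⟨c, hvars', fun e he => ?_⟩
  rw [coe_target]
  have hred : red2 I ((MvPowerSeries.X (Sum.inl (m - 1)) : MvPowerSeries (ℕ ⊕ ℕ) B) ^ d
        + ∑ i : Fin d, s i * (MvPowerSeries.X (Sum.inl (m - 1))) ^ (i : ℕ))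
      = (MvPowerSeries.X (Sum.inl (m - 1)) : MvPowerSeries (ℕ ⊕ ℕ) (B ⧸ I)) ^ d
        + ∑ i : Fin d, red2 I (s i) * (MvPowerSeries.X (Sum.inl (m - 1))) ^ (i : ℕ) := by
    simp only [red2, map_add, map_pow, map_sum, map_mul, MvPowerSeries.map_X]
  rw [hred, map_add, map_add, map_sum, map_sum]
  congr 1
  refine Finset.sum_congr rfl fun i _ => ?_
  rw [MvPowerSeries.coeff_mul, MvPowerSeries.coeff_mul]
  refine Finset.sum_congr rfl ?_
  rintro ⟨a, b⟩ hab
  rw [Finset.HasAntidiagonal.mem_antidiagonal] at hab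
  dsimp only at hab ⊢
  have ha : ∀ j : ℕ, j < n → a (Sum.inr j) = 0 := by
    intro j hj
    have h2 := DFunLike.congr_fun hab (Sum.inr j)
    have h3 := he j hj
    simp only [Finsupp.add_apply] at h2
    omega
  rw [hcc i a ha]

end SCWAux

open SCW SCWAux in
/-- separated Weierstrass preparation implies Weierstrass division in `ξ_m`. -/
theorem stmt1 {B : Type u} [CommRing B] (I : Ideal B) (hI : I ≠ ⊤)
    (ℬ : SepFamily B I) (hWP : SepHasWP ℬ) :
    ∀ m n d : ℕ, 1 ≤ m → ∀ f ∈ ℬ.Bmn m n, SepRegXi I m n d f → ∀ g ∈ ℬ.Bmn m n,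
      ∃! qr : MvPowerSeries (ℕ ⊕ ℕ) B × (Fin d → MvPowerSeries (ℕ ⊕ ℕ) B),
        qr.1 ∈ ℬ.Bmn m n ∧ (∀ i, qr.2 i ∈ ℬ.Bmn (m - 1) n) ∧
        g = qr.1 * f + ∑ i : Fin d, qr.2 i * (MvPowerSeries.X (Sum.inl (m - 1))) ^ (i : ℕ) := by
  classical
  obtain ⟨hWPxi, -⟩ := hWP
  intro m n d hm f hfmem hfreg g hgmem
  obtain ⟨⟨u, s⟩, ⟨humem, ⟨v, hvmem, huv⟩, hsmem, hfeq⟩, -⟩ :=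
    hWPxi m n d hm f hfmem hfreg
  dsimp only at humem hsmem hfeq
  have hmn1 : n ≤ n + 1 := Nat.le_succ n
  have hm1 : m - 1 ≤ m := Nat.sub_le m 1
  haveI : Nontrivial B := nontrivial_of_ne_top hI
  have hξok : varOK m n (Sum.inl (m - 1)) := by simp only [varOK, Sum.elim_inl]; omega
  have hξmem : (X (Sum.inl (m - 1)) : MvPowerSeries (ℕ ⊕ ℕ) B) ∈ ℬ.Bmn m n :=
    X_mem ℬ hI hξok
  have htmem1 : (X (Sum.inr n) : MvPowerSeries (ℕ ⊕ ℕ) B) ∈ ℬ.Bmn m (n + 1) :=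
    X_mem ℬ hI (by simp [varOK])
  have htmem2 : (X (Sum.inr n) : MvPowerSeries (ℕ ⊕ ℕ) B) ∈ ℬ.Bmn (m - 1) (n + 1) :=
    X_mem ℬ hI (by simp [varOK])
  have hδsupp : ∀ w ∈ (Finsupp.single (Sum.inr n) (1 : ℕ)).support, ¬ varOK m n w := by
    intro w hw
    rw [Finsupp.support_single_ne_zero _ one_ne_zero, Finset.mem_singleton] at hw
    subst hw
    simp [varOK]
  have hδsupp' : ∀ w ∈ (Finsupp.single (Sum.inr n) (1 : ℕ)).support, ¬ varOK (m - 1) n w := by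
    intro w hw
    rw [Finsupp.support_single_ne_zero _ one_ne_zero, Finset.mem_singleton] at hw
    subst hw
    simp [varOK]
  have h0supp : ∀ (k : ℕ), ∀ w ∈ (0 : (ℕ ⊕ ℕ) →₀ ℕ).support, ¬ varOK k n w := by
    intro k w hw
    simp at hw
  set P : MvPowerSeries (ℕ ⊕ ℕ) B :=
    (X (Sum.inl (m - 1))) ^ d + ∑ i : Fin d, s i * (X (Sum.inl (m - 1))) ^ (i : ℕ) with hP
  have hPmem : P ∈ ℬ.Bmn m n :=
    add_mem (pow_mem hξmem d)
      (sum_mem fun i _ => mul_mem (ℬ.mono hm1 le_rfl (hsmem i)) (pow_mem hξmem _))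
  obtain ⟨c, hcvars, hcoeffP⟩ := reg_of_P ℬ s hsmem
  have hregP : SepRegXi I m n d P := ⟨c, hcvars, fun e he => hcoeffP e he⟩
  have hreg_pt : ∀ g' : MvPowerSeries (ℕ ⊕ ℕ) B,
      SepRegXi I m (n + 1) d (P + X (Sum.inr n) * g') := by
    intro g'
    refine ⟨c, hcvars, fun e he => ?_⟩
    have he' : ∀ j : ℕ, j < n → e (Sum.inr j) = 0 := fun j hj => he j (Nat.lt_succ_of_lt hj)
    have hen : e (Sum.inr n) = 0 := he n (Nat.lt_succ_self n)
    have hsplit : red2 I (P + X (Sum.inr n) * g')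
        = red2 I P + X (Sum.inr n) * red2 I g' := by
      simp only [red2, map_add, map_mul, MvPowerSeries.map_X]
    rw [hsplit, map_add, coeff_Xrho_mul hen, add_zero]
    exact hcoeffP e he'
  -- prepare `P + ρ_{n+1} g`
  have hhmem : P + X (Sum.inr n) * g ∈ ℬ.Bmn m (n + 1) :=
    add_mem (ℬ.mono le_rfl hmn1 hPmem) (mul_mem htmem1 (ℬ.mono le_rfl hmn1 hgmem))
  obtain ⟨⟨U, R⟩, ⟨hUmem, ⟨W, hWmem, hUW⟩, hRmem, hheq⟩, -⟩ :=
    hWPxi m (n + 1) d hm (P + X (Sum.inr n) * g) hhmem (hreg_pt g)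
  dsimp only at hUmem hRmem hheq
  -- the `ρ_{n+1}`-degree-0 part
  have hπt : slice2 m n 0 (X (Sum.inr n) : MvPowerSeries (ℕ ⊕ ℕ) B) = 0 :=
    slice2_zero_X_rho m n
  have hπh : slice2 m n 0 (P + X (Sum.inr n) * g) = P := by
    rw [slice2_add, slice2_zero_mul, hπt, zero_mul, add_zero, slice2_zero_of_mem ℬ hPmem]
  have hπQQ : slice2 m n 0
        ((X (Sum.inl (m - 1))) ^ d + ∑ i : Fin d, R i * (X (Sum.inl (m - 1))) ^ (i : ℕ))
      = (X (Sum.inl (m - 1))) ^ d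
        + ∑ i : Fin d, slice2 m n 0 (R i) * (X (Sum.inl (m - 1))) ^ (i : ℕ) := by
    rw [slice2_add, slice2_sum, slice2_zero_of_mem ℬ (pow_mem hξmem d)]
    congr 1
    refine Finset.sum_congr rfl fun i _ => ?_
    rw [slice2_zero_mul, slice2_zero_of_mem ℬ (pow_mem hξmem (i : ℕ))]
  have hπeq : P = slice2 m n 0 U * ((X (Sum.inl (m - 1))) ^ d
      + ∑ i : Fin d, slice2 m n 0 (R i) * (X (Sum.inl (m - 1))) ^ (i : ℕ)) := by
    conv_lhs => rw [← hπh, hheq]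
    rw [slice2_zero_mul, hπQQ]
  -- uniqueness of the preparation of `P` itself
  obtain ⟨z, hz, huniqP⟩ := hWPxi m n d hm P hPmem hregP
  have eA : (slice2 m n 0 U, fun i => slice2 m n 0 (R i)) = z := by
    refine huniqP _ ⟨?_, ?_, ?_, ?_⟩
    · exact ℬ.slice_mem le_rfl hmn1 0 (h0supp m) U hUmem
    · exact ⟨slice2 m n 0 W, ℬ.slice_mem le_rfl hmn1 0 (h0supp m) W hWmem,
        by rw [← slice2_zero_mul, hUW, slice2_one]⟩
    · intro i
      show slice2 m n 0 (R i) ∈ ℬ.Bmn (m - 1) n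
      rw [slice2_pred ℬ hm 0 (hRmem i)]
      exact ℬ.slice_mem le_rfl hmn1 0 (h0supp (m - 1)) (R i) (hRmem i)
    · exact hπeq
  have eB : ((1 : MvPowerSeries (ℕ ⊕ ℕ) B), s) = z := by
    refine huniqP _ ⟨one_mem _, ⟨1, one_mem _, one_mul 1⟩, hsmem, ?_⟩
    rw [one_mul]
  have eAB := eA.trans eB.symm
  have hπU : slice2 m n 0 U = 1 := congrArg Prod.fst eAB
  have hπR : ∀ i, slice2 m n 0 (R i) = s i := fun i => congrFun (congrArg Prod.snd eAB) i
  -- the `ρ_{n+1}`-degree-1 part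
  have hσt : slice2 m n (Finsupp.single (Sum.inr n) 1)
      (X (Sum.inr n) : MvPowerSeries (ℕ ⊕ ℕ) B) = 1 := slice2_delta_X_rho m n
  have hσh : slice2 m n (Finsupp.single (Sum.inr n) 1) (P + X (Sum.inr n) * g) = g := by
    rw [slice2_add, slice2_delta_of_mem ℬ hPmem, zero_add, slice2_delta_mul, hσt, hπt,
      slice2_zero_of_mem ℬ hgmem, one_mul, zero_mul, add_zero]
  have hσQQ : slice2 m n (Finsupp.single (Sum.inr n) 1)
        ((X (Sum.inl (m - 1))) ^ d + ∑ i : Fin d, R i * (X (Sum.inl (m - 1))) ^ (i : ℕ))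
      = ∑ i : Fin d, slice2 m n (Finsupp.single (Sum.inr n) 1) (R i)
          * (X (Sum.inl (m - 1))) ^ (i : ℕ) := by
    rw [slice2_add, slice2_delta_of_mem ℬ (pow_mem hξmem d), zero_add, slice2_sum]
    refine Finset.sum_congr rfl fun i _ => ?_
    rw [slice2_delta_mul, slice2_zero_of_mem ℬ (pow_mem hξmem (i : ℕ)),
      slice2_delta_of_mem ℬ (pow_mem hξmem (i : ℕ)), mul_zero, add_zero]
  have hπQQP : (X (Sum.inl (m - 1))) ^ d
      + ∑ i : Fin d, slice2 m n 0 (R i) * (X (Sum.inl (m - 1))) ^ (i : ℕ) = P := by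
    rw [hP]
    congr 1
    exact Finset.sum_congr rfl fun i _ => by rw [hπR i]
  have hσeq : g = slice2 m n (Finsupp.single (Sum.inr n) 1) U * P
      + ∑ i : Fin d, slice2 m n (Finsupp.single (Sum.inr n) 1) (R i)
          * (X (Sum.inl (m - 1))) ^ (i : ℕ) := by
    conv_lhs => rw [← hσh, hheq]
    rw [slice2_delta_mul, hπQQ, hπQQP, hπU, one_mul, hσQQ]
  have hvf : v * f = P := by rw [hfeq, ← mul_assoc, mul_comm v u, huv, one_mul]
  -- the candidate quotient and remainder
  have hq0mem : slice2 m n (Finsupp.single (Sum.inr n) 1) U * v ∈ ℬ.Bmn m n :=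
    mul_mem (ℬ.slice_mem le_rfl hmn1 _ hδsupp U hUmem) hvmem
  have hr0mem : ∀ i, slice2 m n (Finsupp.single (Sum.inr n) 1) (R i) ∈ ℬ.Bmn (m - 1) n := by
    intro i
    rw [slice2_pred ℬ hm _ (hRmem i)]
    exact ℬ.slice_mem le_rfl hmn1 _ hδsupp' (R i) (hRmem i)
  have hdiv : g = (slice2 m n (Finsupp.single (Sum.inr n) 1) U * v) * f
      + ∑ i : Fin d, slice2 m n (Finsupp.single (Sum.inr n) 1) (R i)
          * (X (Sum.inl (m - 1))) ^ (i : ℕ) := by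
    rw [mul_assoc, hvf]
    exact hσeq
  -- the core uniqueness argument
  have core : ∀ q₁ ∈ ℬ.Bmn m n, ∀ r₁ : Fin d → MvPowerSeries (ℕ ⊕ ℕ) B,
      (∀ i, r₁ i ∈ ℬ.Bmn (m - 1) n) →
      q₁ * P + ∑ i : Fin d, r₁ i * (X (Sum.inl (m - 1))) ^ (i : ℕ) = 0 →
      q₁ = 0 ∧ ∀ i, r₁ i = 0 := by
    intro q₁ hq₁ r₁ hr₁ hzero
    have hmem1 : (1 : MvPowerSeries (ℕ ⊕ ℕ) B) + X (Sum.inr n) * q₁ ∈ ℬ.Bmn m (n + 1) :=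
      add_mem (one_mem _) (mul_mem htmem1 (ℬ.mono le_rfl hmn1 hq₁))
    have hreg0 : SepRegXi I m (n + 1) 0
        ((1 : MvPowerSeries (ℕ ⊕ ℕ) B) + X (Sum.inr n) * q₁) := by
      refine ⟨fun i => i.elim0, fun i => i.elim0, fun e he => ?_⟩
      have hen : e (Sum.inr n) = 0 := he n (Nat.lt_succ_self n)
      have h1 : red2 I ((1 : MvPowerSeries (ℕ ⊕ ℕ) B) + X (Sum.inr n) * q₁)
          = 1 + X (Sum.inr n) * red2 I q₁ := by
        simp only [red2, map_add, map_one, map_mul, MvPowerSeries.map_X]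
      rw [h1, map_add, coeff_Xrho_mul hen, add_zero]
      simp
    obtain ⟨⟨u₀, r₀⟩, ⟨hu₀mem, ⟨w₀, hw₀mem, hu₀w₀⟩, -, h1eq⟩, -⟩ :=
      hWPxi m (n + 1) 0 hm _ hmem1 hreg0
    dsimp only at h1eq
    have h1eq' : (1 : MvPowerSeries (ℕ ⊕ ℕ) B) + X (Sum.inr n) * q₁ = u₀ := by
      rw [h1eq]; simp
    have hunit : ((1 : MvPowerSeries (ℕ ⊕ ℕ) B) + X (Sum.inr n) * q₁) * w₀ = 1 := by
      rw [h1eq']; exact hu₀w₀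
    have hrw : ((1 : MvPowerSeries (ℕ ⊕ ℕ) B) + X (Sum.inr n) * q₁) * P
        = P + X (Sum.inr n) * (q₁ * P) := by ring
    have hreg' : SepRegXi I m (n + 1) d
        (((1 : MvPowerSeries (ℕ ⊕ ℕ) B) + X (Sum.inr n) * q₁) * P) := by
      rw [hrw]; exact hreg_pt (q₁ * P)
    obtain ⟨z', hz', huniq'⟩ := hWPxi m (n + 1) d hm _
      (mul_mem hmem1 (ℬ.mono le_rfl hmn1 hPmem)) hreg'
    have eA' : ((1 : MvPowerSeries (ℕ ⊕ ℕ) B) + X (Sum.inr n) * q₁, fun i => s i) = z' := by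
      refine huniq' _ ⟨hmem1, ⟨w₀, hw₀mem, hunit⟩,
        fun i => ℬ.mono le_rfl hmn1 (hsmem i), ?_⟩
      rw [hP]
    have eB' : ((1 : MvPowerSeries (ℕ ⊕ ℕ) B),
        fun i => s i - X (Sum.inr n) * r₁ i) = z' := by
      refine huniq' _ ⟨one_mem _, ⟨1, one_mem _, one_mul 1⟩,
        fun i => sub_mem (ℬ.mono le_rfl hmn1 (hsmem i))
          (mul_mem htmem2 (ℬ.mono le_rfl hmn1 (hr₁ i))), ?_⟩
      have hsum : ∑ i : Fin d, (s i - X (Sum.inr n) * r₁ i) * (X (Sum.inl (m - 1))) ^ (i : ℕ)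
          = ∑ i : Fin d, s i * (X (Sum.inl (m - 1))) ^ (i : ℕ)
            - X (Sum.inr n) * ∑ i : Fin d, r₁ i * (X (Sum.inl (m - 1))) ^ (i : ℕ) := by
        rw [Finset.mul_sum, ← Finset.sum_sub_distrib]
        exact Finset.sum_congr rfl fun i _ => by ring
      show ((1 : MvPowerSeries (ℕ ⊕ ℕ) B) + X (Sum.inr n) * q₁) * P
        = 1 * ((X (Sum.inl (m - 1))) ^ d
          + ∑ i : Fin d, (s i - X (Sum.inr n) * r₁ i) * (X (Sum.inl (m - 1))) ^ (i : ℕ))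
      rw [one_mul, hsum]
      linear_combination hP + X (Sum.inr n) * hzero
    have eAB' := eA'.trans eB'.symm
    have ht1 : X (Sum.inr n) * q₁ = 0 := by
      have h := congrArg Prod.fst eAB'
      dsimp only at h
      linear_combination h
    have ht2 : ∀ i, X (Sum.inr n) * r₁ i = 0 := by
      intro i
      have h := congrFun (congrArg Prod.snd eAB') i
      dsimp only at h
      linear_combination h
    exact ⟨X_mul_cancel ht1, fun i => X_mul_cancel (ht2 i)⟩
  -- conclusion
  refine ⟨(slice2 m n (Finsupp.single (Sum.inr n) 1) U * v,
      fun i => slice2 m n (Finsupp.single (Sum.inr n) 1) (R i)),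
    ⟨hq0mem, hr0mem, hdiv⟩, ?_⟩
  rintro ⟨q', r'⟩ ⟨hq'mem, hr'mem, heq'⟩
  dsimp only at hq'mem hr'mem heq'
  have hsum2 : ∑ i : Fin d, (r' i - slice2 m n (Finsupp.single (Sum.inr n) 1) (R i))
        * (X (Sum.inl (m - 1))) ^ (i : ℕ)
      = ∑ i : Fin d, r' i * (X (Sum.inl (m - 1))) ^ (i : ℕ)
        - ∑ i : Fin d, slice2 m n (Finsupp.single (Sum.inr n) 1) (R i)
            * (X (Sum.inl (m - 1))) ^ (i : ℕ) := by
    rw [← Finset.sum_sub_distrib]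
    exact Finset.sum_congr rfl fun i _ => by ring
  have hzero : ((q' - slice2 m n (Finsupp.single (Sum.inr n) 1) U * v) * u) * P
      + ∑ i : Fin d, (r' i - slice2 m n (Finsupp.single (Sum.inr n) 1) (R i))
          * (X (Sum.inl (m - 1))) ^ (i : ℕ) = 0 := by
    rw [hsum2]
    linear_combination hdiv - heq'
      + (slice2 m n (Finsupp.single (Sum.inr n) 1) U * v - q') * hfeq
  obtain ⟨hq0, hr0⟩ := core _ (mul_mem (sub_mem hq'mem hq0mem) humem) _
    (fun i => sub_mem (hr'mem i) (hr0mem i)) hzero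
  have hq' : q' = slice2 m n (Finsupp.single (Sum.inr n) 1) U * v := by
    refine sub_eq_zero.mp ?_
    calc q' - slice2 m n (Finsupp.single (Sum.inr n) 1) U * v
        = ((q' - slice2 m n (Finsupp.single (Sum.inr n) 1) U * v) * u) * v := by
          rw [mul_assoc, huv, mul_one]
      _ = 0 := by rw [hq0, zero_mul]
  have hr' : r' = fun i => slice2 m n (Finsupp.single (Sum.inr n) 1) (R i) :=
    funext fun i => sub_eq_zero.mp (hr0 i)
  rw [Prod.mk.injEq]
  exact ⟨hq', hr'⟩
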